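/- arXiv:2208.10476 — 4 statements merged into one kernel-verified Lean document; each statement's English description precedes it below -/
import Mathlib

section
/- The set P_n of partitions with n parts (weakly increasing sequences of n non-negative integers), ordered by dominance (μ ⊴ λ iff for all k, μ_k + μ_{k+1} + ... + μ_n ≤ λ_k + ... + λ_n), forms a lattice. -/
/-- The dominance order on `n`-tuples: `μ ⊴ λ` iff all tail sums of `μ` are
bounded by the corresponding tail sums of `λ`. -/
def dominates (n : ℕ) (μ lam : Fin n → ℕ) : Prop :=
  ∀ k : Fin n, ∑ i ∈ Finset.Ici k, μ i ≤ ∑ i ∈ Finset.Ici k, lam i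

/-- `P_n`: the set of partitions with `n` parts, i.e. weakly increasing
`n`-tuples of non-negative integers. -/
def PartitionN (n : ℕ) := {l : Fin n → ℕ // Monotone l}

/-! ### Auxiliary machinery: tail sums -/

/-- The tail sum of `f` starting at position `k` (as a natural number index). -/
def tailSum (n : ℕ) (f : Fin n → ℕ) (k : ℕ) : ℕ :=
  ∑ i ∈ Finset.univ.filter (fun i : Fin n => k ≤ i.1), f i

lemma tailSum_Ici {n : ℕ} (f : Fin n → ℕ) (k : Fin n) :
    ∑ i ∈ Finset.Ici k, f i = tailSum n f k.1 := by
  unfold tailSum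
  congr 1
  ext i
  simp only [Finset.mem_Ici, Finset.mem_filter, Finset.mem_univ, true_and, Fin.le_def]

lemma tailSum_eq_zero {n : ℕ} (f : Fin n → ℕ) {k : ℕ} (h : n ≤ k) :
    tailSum n f k = 0 := by
  unfold tailSum
  rw [Finset.filter_false_of_mem, Finset.sum_empty]
  intro i _
  have := i.isLt
  omega

lemma tailSum_succ {n : ℕ} (f : Fin n → ℕ) {k : ℕ} (h : k < n) :
    tailSum n f k = f ⟨k, h⟩ + tailSum n f (k + 1) := by
  unfold tailSum
  rw [show (Finset.univ.filter fun i : Fin n => k ≤ i.1) =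
      insert ⟨k, h⟩ (Finset.univ.filter fun i : Fin n => k + 1 ≤ i.1) by
    ext i; simp [Fin.ext_iff]; omega]
  rw [Finset.sum_insert (by simp)]

lemma tailSum_mono {n : ℕ} (f : Fin n → ℕ) {a b : ℕ} (h : a ≤ b) :
    tailSum n f b ≤ tailSum n f a := by
  apply Finset.sum_le_sum_of_subset
  intro i
  simp only [Finset.mem_filter, Finset.mem_univ, true_and]
  omega

/-- Tail sums of a monotone function are concave. -/
lemma tailSum_concave {n : ℕ} {f : Fin n → ℕ} (hf : Monotone f) {k : ℕ}
    (hk : k + 2 ≤ n) :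
    tailSum n f k + tailSum n f (k + 2) ≤ 2 * tailSum n f (k + 1) := by
  have h1 : k < n := by omega
  have h2 : k + 1 < n := by omega
  rw [tailSum_succ f h1, tailSum_succ f h2]
  have hle : f ⟨k, h1⟩ ≤ f ⟨k + 1, h2⟩ := hf (by simp [Fin.le_def])
  have e : k + 1 + 1 = k + 2 := by omega
  rw [e]
  omega

/-- Reconstruct a tuple from a tail-sum-like function. -/
def ofTail (n : ℕ) (g : ℕ → ℕ) : Fin n → ℕ := fun i => g i.1 - g (i.1 + 1)

lemma monotone_ofTail {n : ℕ} (g : ℕ → ℕ)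
    (hdec : ∀ k, g (k + 1) ≤ g k)
    (hconc : ∀ k, k + 2 ≤ n → g k + g (k + 2) ≤ 2 * g (k + 1)) :
    Monotone (ofTail n g) := by
  intro i j hij
  have hij' : i.1 ≤ j.1 := hij
  have hjlt : j.1 < n := j.isLt
  have key : ∀ m, i.1 ≤ m → m < n → g i.1 + g (m + 1) ≤ g (i.1 + 1) + g m := by
    intro m
    induction m with
    | zero =>
        intro h1 _
        have : i.1 = 0 := by omega
        rw [this]
        omega
    | succ m ih =>
        intro h1 h2
        rcases Nat.lt_or_ge i.1 (m + 1) with hc | hc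
        · have hih := ih (by omega) (by omega)
          have hcc := hconc m (by omega)
          have e : m + 2 = m + 1 + 1 := by omega
          rw [e] at hcc
          omega
        · have : i.1 = m + 1 := by omega
          rw [this]
          omega
  have hk := key j.1 hij' hjlt
  have hd1 := hdec i.1
  have hd2 := hdec j.1
  unfold ofTail
  omega

lemma tailSum_ofTail {n : ℕ} (g : ℕ → ℕ)
    (hdec : ∀ k, g (k + 1) ≤ g k) (hzero : g n = 0) :
    ∀ k ≤ n, tailSum n (ofTail n g) k = g k := by
  have key : ∀ d, d ≤ n → tailSum n (ofTail n g) (n - d) = g (n - d) := by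
    intro d
    induction d with
    | zero =>
        intro _
        simp only [Nat.sub_zero]
        rw [tailSum_eq_zero _ le_rfl, hzero]
    | succ d ih =>
        intro hd
        have hlt : n - (d + 1) < n := by omega
        rw [tailSum_succ _ hlt]
        have e : n - (d + 1) + 1 = n - d := by omega
        rw [e, ih (by omega)]
        show g (n - (d + 1)) - g (n - (d + 1) + 1) + g (n - d) = g (n - (d + 1))
        rw [e]
        have := hdec (n - (d + 1))
        rw [e] at this
        omega
  intro k hk
  have := key (n - k) (by omega)
  rwa [show n - (n - k) = k by omega] at this

lemma dominates_iff {n : ℕ} (μ lam : Fin n → ℕ) :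
    dominates n μ lam ↔ ∀ k < n, tailSum n μ k ≤ tailSum n lam k := by
  constructor
  · intro h k hk
    have := h ⟨k, hk⟩
    rwa [tailSum_Ici, tailSum_Ici] at this
  · intro h k
    rw [tailSum_Ici, tailSum_Ici]
    exact h k.1 k.isLt

lemma apply_eq_tailSum_sub {n : ℕ} (f : Fin n → ℕ) (k : Fin n) :
    f k = tailSum n f k.1 - tailSum n f (k.1 + 1) := by
  rw [tailSum_succ f k.isLt]
  simp

/-- Existence of a partition whose tail sums are the pointwise min. -/
lemma exists_min_partition {n : ℕ} (μ lam : PartitionN n) :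
    ∃ m : PartitionN n, ∀ k ≤ n,
      tailSum n m.1 k = min (tailSum n μ.1 k) (tailSum n lam.1 k) := by
  set g : ℕ → ℕ := fun k => min (tailSum n μ.1 k) (tailSum n lam.1 k) with hg
  have hdec : ∀ k, g (k + 1) ≤ g k := by
    intro k
    have h1 := tailSum_mono μ.1 (show k ≤ k + 1 by omega)
    have h2 := tailSum_mono lam.1 (show k ≤ k + 1 by omega)
    simp only [hg]
    omega
  have hconc : ∀ k, k + 2 ≤ n → g k + g (k + 2) ≤ 2 * g (k + 1) := by
    intro k hk
    have h1 := tailSum_concave μ.2 hk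
    have h2 := tailSum_concave lam.2 hk
    simp only [hg]
    omega
  have hzero : g n = 0 := by
    simp only [hg, tailSum_eq_zero _ le_rfl]
    rfl
  exact ⟨⟨ofTail n g, monotone_ofTail g hdec hconc⟩, tailSum_ofTail g hdec hzero⟩

/-- The set `P_n` of partitions with `n` parts, ordered by dominance, forms a
lattice: dominance is reflexive, transitive and antisymmetric on `P_n`, and any
two partitions have a join (least upper bound) and a meet (greatest lower
bound) in the dominance order. -/
theorem dominance_order_is_lattice (n : ℕ) :
    (∀ μ : PartitionN n, dominates n μ.1 μ.1) ∧
    (∀ μ ν ρ : PartitionN n, dominates n μ.1 ν.1 → dominates n ν.1 ρ.1 →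
      dominates n μ.1 ρ.1) ∧
    (∀ μ lam : PartitionN n, dominates n μ.1 lam.1 → dominates n lam.1 μ.1 →
      μ = lam) ∧
    (∀ μ lam : PartitionN n, ∃ j : PartitionN n,
      dominates n μ.1 j.1 ∧ dominates n lam.1 j.1 ∧
      ∀ ρ : PartitionN n, dominates n μ.1 ρ.1 → dominates n lam.1 ρ.1 →
        dominates n j.1 ρ.1) ∧
    (∀ μ lam : PartitionN n, ∃ m : PartitionN n,
      dominates n m.1 μ.1 ∧ dominates n m.1 lam.1 ∧
      ∀ ρ : PartitionN n, dominates n ρ.1 μ.1 → dominates n ρ.1 lam.1 →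
        dominates n ρ.1 m.1) := by
  refine ⟨?_, ?_, ?_, ?_, ?_⟩
  · -- reflexivity
    intro μ k
    exact le_rfl
  · -- transitivity
    intro μ ν ρ h1 h2 k
    exact le_trans (h1 k) (h2 k)
  · -- antisymmetry
    intro μ lam h1 h2
    have key : ∀ m ≤ n, tailSum n μ.1 m = tailSum n lam.1 m := by
      intro m hm
      rcases eq_or_lt_of_le hm with he | hlt
      · rw [he, tailSum_eq_zero _ le_rfl, tailSum_eq_zero _ le_rfl]
      · exact le_antisymm ((dominates_iff _ _).1 h1 m hlt)
          ((dominates_iff _ _).1 h2 m hlt)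
    apply Subtype.ext
    funext k
    rw [apply_eq_tailSum_sub μ.1 k, apply_eq_tailSum_sub lam.1 k,
      key k.1 (le_of_lt k.isLt), key (k.1 + 1) k.isLt]
  · -- join
    intro μ lam
    -- the set of common upper bounds, with the sum of all tail sums as measure
    set F : PartitionN n → Prop :=
      fun ρ => dominates n μ.1 ρ.1 ∧ dominates n lam.1 ρ.1 with hF
    set Φ : PartitionN n → ℕ :=
      fun ρ => ∑ k ∈ Finset.range n, tailSum n ρ.1 k with hΦ
    -- F is nonempty: μ + λ is a common upper bound
    have hub : ∃ ρ, F ρ := by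
      refine ⟨⟨fun i => μ.1 i + lam.1 i, μ.2.add lam.2⟩, ?_, ?_⟩ <;>
      · intro k
        rw [Finset.sum_add_distrib]
        omega
    set S : Set ℕ := {c | ∃ ρ, F ρ ∧ Φ ρ = c} with hS
    have hSne : S.Nonempty := by
      obtain ⟨ρ, hρ⟩ := hub
      exact ⟨Φ ρ, ρ, hρ, rfl⟩
    obtain ⟨j, hjF, hjΦ⟩ := Nat.sInf_mem hSne
    refine ⟨j, hjF.1, hjF.2, ?_⟩
    intro ρ hμρ hlamρ
    -- take the "min" of j and ρ: it is in F and has Φ ≤ Φ j, hence Φ = Φ j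
    obtain ⟨m, hm⟩ := exists_min_partition j ρ
    have hmF : F m := by
      refine ⟨?_, ?_⟩ <;> rw [dominates_iff] <;> intro k hk <;> rw [hm k (le_of_lt hk)]
      · exact le_min ((dominates_iff _ _).1 hjF.1 k hk) ((dominates_iff _ _).1 hμρ k hk)
      · exact le_min ((dominates_iff _ _).1 hjF.2 k hk) ((dominates_iff _ _).1 hlamρ k hk)
    have hle : ∀ k ∈ Finset.range n, tailSum n m.1 k ≤ tailSum n j.1 k := by
      intro k hk
      rw [hm k (le_of_lt (Finset.mem_range.1 hk))]
      exact min_le_left _ _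
    have hΦm_le : Φ m ≤ Φ j := Finset.sum_le_sum hle
    have hΦj_le : sInf S ≤ Φ m := Nat.sInf_le ⟨m, hmF, rfl⟩
    have heq : Φ m = Φ j := le_antisymm hΦm_le (hjΦ ▸ hΦj_le)
    have hpt : ∀ k ∈ Finset.range n, tailSum n m.1 k = tailSum n j.1 k :=
      (Finset.sum_eq_sum_iff_of_le hle).1 heq
    rw [dominates_iff]
    intro k hk
    have h := hpt k (Finset.mem_range.2 hk)
    rw [hm k (le_of_lt hk)] at h
    omega
  · -- meet
    intro μ lam
    obtain ⟨m, hm⟩ := exists_min_partition μ lam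
    refine ⟨m, ?_, ?_, ?_⟩
    · rw [dominates_iff]
      intro k hk
      rw [hm k (le_of_lt hk)]
      exact min_le_left _ _
    · rw [dominates_iff]
      intro k hk
      rw [hm k (le_of_lt hk)]
      exact min_le_right _ _
    · intro ρ h1 h2
      rw [dominates_iff]
      intro k hk
      rw [hm k (le_of_lt hk)]
      exact le_min ((dominates_iff _ _).1 h1 k hk) ((dominates_iff _ _).1 h2 k hk)
end

section
/- If I and J are symmetric strongly shifted monomial ideals in K[x_1,...,x_n], then the product IJ is a symmetric strongly shifted ideal. -/
open MvPolynomial Pointwise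

/-- The monomial `x^a` in `K[x_1,...,x_n]`. -/
noncomputable def mon (K : Type) [Field K] (n : ℕ) (a : Fin n → ℕ) :
    MvPolynomial (Fin n) K :=
  monomial (Finsupp.equivFunOnFinite.symm a) 1

/-- A monomial ideal: an ideal generated by monomials. -/
def IsMonomialIdeal (K : Type) [Field K] (n : ℕ)
    (I : Ideal (MvPolynomial (Fin n) K)) : Prop :=
  ∃ S : Set (Fin n → ℕ), I = Ideal.span (mon K n '' S)

/-- A symmetric (`𝔖_n`-fixed) ideal. -/
def IsSymmetricIdeal (K : Type) [Field K] (n : ℕ)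
    (I : Ideal (MvPolynomial (Fin n) K)) : Prop :=
  ∀ σ : Equiv.Perm (Fin n), Ideal.map (rename (σ : Fin n → Fin n)) I = I

/-- The exponent vector obtained from `a` by the Borel move `x^a ↦ x^a · x_i / x_j`. -/
def borelMoveVec (n : ℕ) (a : Fin n → ℕ) (i j : Fin n) : Fin n → ℕ :=
  fun k => if k = i then a k + 1 else if k = j then a k - 1 else a k

/-- A symmetric strongly shifted ideal (sssi). -/
def IsSSSI (K : Type) [Field K] (n : ℕ)
    (I : Ideal (MvPolynomial (Fin n) K)) : Prop :=
  IsMonomialIdeal K n I ∧ IsSymmetricIdeal K n I ∧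
    ∀ lam : Fin n → ℕ, Monotone lam → mon K n lam ∈ I →
      ∀ i j : Fin n, i < j → lam i < lam j →
        mon K n (borelMoveVec n lam i j) ∈ I

section Aux

variable {K : Type} [Field K] {n : ℕ}

lemma symm_add (a b : Fin n → ℕ) :
    Finsupp.equivFunOnFinite.symm (a + b) =
      Finsupp.equivFunOnFinite.symm a + Finsupp.equivFunOnFinite.symm b := by
  ext k; simp

lemma mon_mul (a b : Fin n → ℕ) : mon K n a * mon K n b = mon K n (a + b) := by
  simp [mon, monomial_mul, symm_add]

lemma mon_rename (σ : Equiv.Perm (Fin n)) (c : Fin n → ℕ) :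
    rename (σ : Fin n → Fin n) (mon K n c) = mon K n (c ∘ σ.symm) := by
  have h : Finsupp.mapDomain (σ : Fin n → Fin n) (Finsupp.equivFunOnFinite.symm c)
      = Finsupp.equivFunOnFinite.symm (c ∘ σ.symm) := by
    rw [← Finsupp.equivMapDomain_eq_mapDomain]
    ext k
    simp
  rw [mon, rename_monomial, h, mon]

/-- membership is permutation-invariant for a symmetric ideal. -/
lemma mem_perm {I : Ideal (MvPolynomial (Fin n) K)} (hs : IsSymmetricIdeal K n I)
    {c : Fin n → ℕ} (hc : mon K n c ∈ I) (σ : Equiv.Perm (Fin n)) :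
    mon K n (c ∘ σ) ∈ I := by
  have := hs σ.symm
  have hmem : rename (σ.symm : Fin n → Fin n) (mon K n c) ∈
      Ideal.map (rename (σ.symm : Fin n → Fin n)) I :=
    Ideal.mem_map_of_mem _ hc
  rw [this] at hmem
  rwa [mon_rename, Equiv.symm_symm] at hmem

/-- divisibility: if `x^a ∈ I` and `a ≤ c` pointwise then `x^c ∈ I`. -/
lemma mem_of_dvd {I : Ideal (MvPolynomial (Fin n) K)} {a c : Fin n → ℕ}
    (ha : mon K n a ∈ I) (h : ∀ k, a k ≤ c k) : mon K n c ∈ I := by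
  have : mon K n (c - a) * mon K n a = mon K n c := by
    rw [mon_mul]
    congr 1
    funext k
    exact Nat.sub_add_cancel (h k)
  rw [← this]
  exact I.mul_mem_left _ ha

/-- The general exchange lemma for sssi ideals: no monotonicity needed. -/
lemma exchange_general {I : Ideal (MvPolynomial (Fin n) K)} (hI : IsSSSI K n I)
    {a : Fin n → ℕ} (ha : mon K n a ∈ I) {i j : Fin n} (hij : a i < a j) :
    mon K n (borelMoveVec n a i j) ∈ I := by
  obtain ⟨-, hsym, hsh⟩ := hI
  set τ : Equiv.Perm (Fin n) := Tuple.sort a with hτ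
  have hmono : Monotone (a ∘ τ) := Tuple.monotone_sort a
  have hmem : mon K n (a ∘ τ) ∈ I := mem_perm hsym ha τ
  set p := τ.symm i
  set q := τ.symm j
  have hap : (a ∘ τ) p = a i := by simp [p]
  have haq : (a ∘ τ) q = a j := by simp [q]
  have hpq : p < q := by
    by_contra h
    push_neg at h
    have := hmono h
    rw [hap, haq] at this
    omega
  have hval : (a ∘ τ) p < (a ∘ τ) q := by rw [hap, haq]; exact hij
  have hmove := hsh (a ∘ τ) hmono hmem p q hpq hval
  have heq : borelMoveVec n (a ∘ τ) p q = (borelMoveVec n a i j) ∘ τ := by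
    funext k
    simp only [borelMoveVec, Function.comp_apply]
    have h1 : (k = p) ↔ (τ k = i) := by
      constructor
      · rintro rfl; simp [p]
      · intro h; simp [p, ← h]
    have h2 : (k = q) ↔ (τ k = j) := by
      constructor
      · rintro rfl; simp [q]
      · intro h; simp [q, ← h]
    by_cases hk1 : τ k = i
    · rw [if_pos (h1.2 hk1), if_pos hk1]
    · rw [if_neg (fun h => hk1 (h1.1 h)), if_neg hk1]
      by_cases hk2 : τ k = j
      · rw [if_pos (h2.2 hk2), if_pos hk2]
      · rw [if_neg (fun h => hk2 (h2.1 h)), if_neg hk2]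
  rw [heq] at hmove
  have := mem_perm hsym hmove τ.symm
  rwa [show ((borelMoveVec n a i j) ∘ τ) ∘ τ.symm = borelMoveVec n a i j by
    funext k; simp] at this

/-- product of monomial spans. -/
lemma span_mon_mul (S T : Set (Fin n → ℕ)) :
    Ideal.span (mon K n '' S) * Ideal.span (mon K n '' T) =
      Ideal.span (mon K n '' Set.image2 (· + ·) S T) := by
  rw [Ideal.span_mul_span']
  have hset : (mon K n '' S) * (mon K n '' T) = mon K n '' Set.image2 (· + ·) S T := by
    ext x
    simp only [Set.mem_mul, Set.mem_image, Set.mem_image2]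
    constructor
    · rintro ⟨-, ⟨a, ha, rfl⟩, -, ⟨b, hb, rfl⟩, rfl⟩
      exact ⟨a + b, ⟨a, ha, b, hb, rfl⟩, (mon_mul a b).symm⟩
    · rintro ⟨s, ⟨a, ha, b, hb, rfl⟩, rfl⟩
      exact ⟨_, ⟨a, ha, rfl⟩, _, ⟨b, hb, rfl⟩, mon_mul a b⟩
  rw [hset]

/-- Membership of a monomial in a product of monomial ideals gives a splitting. -/
lemma prod_mem_split {I J : Ideal (MvPolynomial (Fin n) K)}
    {S T : Set (Fin n → ℕ)} (hIS : I = Ideal.span (mon K n '' S))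
    (hJT : J = Ideal.span (mon K n '' T)) {c : Fin n → ℕ}
    (hc : mon K n c ∈ I * J) :
    ∃ a ∈ S, ∃ b ∈ T, ∀ k, a k + b k ≤ c k := by
  classical
  rw [hIS, hJT, span_mon_mul] at hc
  have himg : mon K n '' Set.image2 (· + ·) S T =
      (fun s => monomial s (1 : K)) ''
        (Finsupp.equivFunOnFinite.symm '' Set.image2 (· + ·) S T) := by
    rw [Set.image_image]
    rfl
  rw [himg, mem_ideal_span_monomial_image] at hc
  have hsupp : Finsupp.equivFunOnFinite.symm c ∈ (mon K n c).support := by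
    rw [mon, support_monomial, if_neg one_ne_zero]
    exact Finset.mem_singleton_self _
  obtain ⟨si, hsi, hle⟩ := hc _ hsupp
  obtain ⟨s, hs, rfl⟩ := hsi
  obtain ⟨a, ha, b, hb, rfl⟩ := hs
  refine ⟨a, ha, b, hb, fun k => ?_⟩
  have := hle k
  simpa using this

end Aux

/-- The product of two symmetric strongly shifted monomial ideals in
`K[x_1,...,x_n]` is symmetric strongly shifted. -/
theorem product_of_sssi (K : Type) [Field K] (n : ℕ)
    (I J : Ideal (MvPolynomial (Fin n) K))
    (hI : IsSSSI K n I) (hJ : IsSSSI K n J) :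
    IsSSSI K n (I * J) := by
  obtain ⟨⟨S, hIS⟩, hIsym, hIsh⟩ := hI
  obtain ⟨⟨T, hJT⟩, hJsym, hJsh⟩ := hJ
  refine ⟨?_, ?_, ?_⟩
  · exact ⟨Set.image2 (· + ·) S T, by rw [hIS, hJT, span_mon_mul]⟩
  · intro σ
    rw [Ideal.map_mul, hIsym σ, hJsym σ]
  · intro lam hmono hmem i j hij hval
    obtain ⟨a, ha, b, hb, hab⟩ := prod_mem_split hIS hJT hmem
    have haI : mon K n a ∈ I := by
      rw [hIS]; exact Ideal.subset_span ⟨a, ha, rfl⟩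
    have hbJ : mon K n b ∈ J := by
      rw [hJT]; exact Ideal.subset_span ⟨b, hb, rfl⟩
    have key : ∀ a' b' : Fin n → ℕ, mon K n a' ∈ I → mon K n b' ∈ J →
        (∀ k, a' k + b' k ≤ borelMoveVec n lam i j k) →
        mon K n (borelMoveVec n lam i j) ∈ I * J := by
      intro a' b' ha' hb' hle
      have : mon K n a' * mon K n b' ∈ I * J := Ideal.mul_mem_mul ha' hb'
      rw [mon_mul] at this
      exact mem_of_dvd this hle
    by_cases hslack : a j + b j < lam j
    · refine key a b haI hbJ (fun k => ?_)
      have h1 := hab i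
      have h2 := hab j
      have h3 := hab k
      simp only [borelMoveVec]
      split_ifs <;> subst_vars <;> omega
    · push_neg at hslack
      have hcase : a i < a j ∨ b i < b j := by
        by_contra h
        push_neg at h
        have h1 := hab i
        have h2 := hab j
        omega
      rcases hcase with hc | hc
      · have haI' := exchange_general ⟨⟨S, hIS⟩, hIsym, hIsh⟩ haI hc
        refine key _ b haI' hbJ (fun k => ?_)
        have h1 := hab i
        have h2 := hab j
        have h3 := hab k
        simp only [borelMoveVec]
        split_ifs <;> subst_vars <;> omega
      · have hbJ' := exchange_general ⟨⟨T, hJT⟩, hJsym, hJsh⟩ hbJ hc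
        refine key a _ haI hbJ' (fun k => ?_)
        have h1 := hab i
        have h2 := hab j
        have h3 := hab k
        simp only [borelMoveVec]
        split_ifs <;> subst_vars <;> omega
end

section
/- Let B ⊆ P_n be a set of partitions. Then the smallest symmetric strongly shifted ideal containing {x^λ : λ ∈ B} equals the ideal generated by all monomials σ(x^μ) with σ ∈ 𝔖_n, μ ∈ P_n, for which there exists λ ∈ B with |λ| = |μ| and μ ⊴ λ in the dominance order. -/
open MvPolynomial

/-- `Sss(B)`: the smallest symmetric strongly shifted ideal containing the
monomials `x^λ`, `λ ∈ B`. -/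
noncomputable def Sss (K : Type) [Field K] (n : ℕ) (B : Set (Fin n → ℕ)) :
    Ideal (MvPolynomial (Fin n) K) :=
  sInf {J | IsSSSI K n J ∧ ∀ lam ∈ B, mon K n lam ∈ J}

def Tl (n : ℕ) (a : Fin n → ℕ) (k : ℕ) : ℕ :=
  ∑ i ∈ Finset.univ.filter (fun i : Fin n => k ≤ (i : ℕ)), a i

lemma Tl_eq_Ici (n : ℕ) (a : Fin n → ℕ) (k : Fin n) :
    Tl n a (k : ℕ) = ∑ i ∈ Finset.Ici k, a i := by
  unfold Tl; congr 1; ext i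
  simp only [Finset.mem_filter, Finset.mem_univ, true_and, Finset.mem_Ici, Fin.le_def]

lemma Tl_zero (n : ℕ) (a : Fin n → ℕ) : Tl n a 0 = ∑ i, a i := by
  unfold Tl; simp

lemma Tl_of_ge (n : ℕ) (a : Fin n → ℕ) (k : ℕ) (h : n ≤ k) : Tl n a k = 0 := by
  unfold Tl
  rw [Finset.filter_false_of_mem, Finset.sum_empty]
  intro i _; have := i.isLt; omega

lemma Tl_succ (n : ℕ) (a : Fin n → ℕ) (k : ℕ) (h : k < n) :
    Tl n a k = a ⟨k, h⟩ + Tl n a (k + 1) := by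
  unfold Tl
  have hins : Finset.univ.filter (fun i : Fin n => k ≤ (i : ℕ))
      = insert (⟨k, h⟩ : Fin n) (Finset.univ.filter (fun i : Fin n => k + 1 ≤ (i : ℕ))) := by
    ext i; simp [Fin.ext_iff]; omega
  rw [hins, Finset.sum_insert (by simp)]

lemma eq_of_Tl (n : ℕ) (a b : Fin n → ℕ) (h : ∀ k, Tl n a k = Tl n b k) : a = b := by
  funext i
  have h1 : Tl n a (i : ℕ) = a i + Tl n a ((i : ℕ) + 1) := by
    simpa using Tl_succ n a i i.isLt
  have h2 : Tl n b (i : ℕ) = b i + Tl n b ((i : ℕ) + 1) := by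
    simpa using Tl_succ n b i i.isLt
  have h3 := h (i : ℕ); have h4 := h ((i : ℕ) + 1)
  omega

lemma Tl_le_of_dominates (n : ℕ) (μ lam : Fin n → ℕ) (h : dominates n μ lam) :
    ∀ k, Tl n μ k ≤ Tl n lam k := by
  intro k
  rcases lt_or_ge k n with hk | hk
  · have := h ⟨k, hk⟩
    rw [← Tl_eq_Ici, ← Tl_eq_Ici] at this
    exact this
  · rw [Tl_of_ge n μ k hk, Tl_of_ge n lam k hk]

lemma dominates_of_Tl (n : ℕ) (μ lam : Fin n → ℕ) (h : ∀ k, Tl n μ k ≤ Tl n lam k) :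
    dominates n μ lam := by
  intro k; have := h (k : ℕ); rwa [Tl_eq_Ici, Tl_eq_Ici] at this

lemma Tl_borel (n : ℕ) (a : Fin n → ℕ) (P Q : Fin n) (hne : P ≠ Q) (hQ : 1 ≤ a Q) (k : ℕ) :
    Tl n (borelMoveVec n a P Q) k + (if k ≤ (Q : ℕ) then 1 else 0)
      = Tl n a k + (if k ≤ (P : ℕ) then 1 else 0) := by
  unfold Tl
  have e1 : ∀ (c : Fin n → ℕ) (R : Fin n),
      (∑ i ∈ Finset.univ.filter (fun i : Fin n => k ≤ (i : ℕ)), c i)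
        + (if k ≤ (R : ℕ) then 1 else 0)
      = ∑ i ∈ Finset.univ.filter (fun i : Fin n => k ≤ (i : ℕ)),
          (c i + if i = R then 1 else 0) := by
    intro c R
    rw [Finset.sum_add_distrib, Finset.sum_ite_eq' _ R (fun _ => 1)]
    simp
  rw [e1, e1]
  apply Finset.sum_congr rfl
  intro i _
  by_cases h1 : i = P
  · simp [borelMoveVec, h1, hne]
  · by_cases h2 : i = Q
    · simp [borelMoveVec, h2, Ne.symm hne]
      omega
    · simp [borelMoveVec, h1, h2]

lemma borel_monotone (n : ℕ) (a : Fin n → ℕ) (ha : Monotone a) (P Q : Fin n) (hPQ : P < Q)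
    (h2 : a P + 2 ≤ a Q)
    (hmid : ∀ k : Fin n, P < k → k < Q → a P < a k ∧ a k < a Q) :
    Monotone (borelMoveVec n a P Q) := by
  intro x y hxy
  rcases eq_or_lt_of_le hxy with rfl | hxy
  · exact le_refl _
  have hPQ' : P ≠ Q := ne_of_lt hPQ
  have hQP' : Q ≠ P := Ne.symm hPQ'
  unfold borelMoveVec
  by_cases hxP : x = P
  · have hyP : y ≠ P := by rw [hxP] at hxy; exact ne_of_gt hxy
    by_cases hyQ : y = Q
    · simp only [hxP, hyQ, hQP', if_true, if_false, ite_true, ite_false, if_pos rfl,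
        if_neg hQP']
      omega
    · rcases lt_or_gt_of_ne hyQ with hlt | hgt
      · have hm := (hmid y (hxP ▸ hxy) hlt).1
        simp [hxP, hyP, hyQ]
        omega
      · have h3 : a Q ≤ a y := ha (le_of_lt hgt)
        simp [hxP, hyP, hyQ]
        omega
  · by_cases hxQ : x = Q
    · have hyQ : y ≠ Q := by rw [hxQ] at hxy; exact ne_of_gt hxy
      have hyP : y ≠ P := by
        intro h; rw [hxQ] at hxy; rw [h] at hxy; exact absurd (lt_trans hPQ hxy) (lt_irrefl _)
      have h3 : a Q ≤ a y := by rw [← hxQ]; exact ha (le_of_lt hxy)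
      simp [hxP, hxQ, hyP, hyQ, hQP']
      omega
    · by_cases hyP : y = P
      · have h3 : a x ≤ a P := by rw [← hyP]; exact ha (le_of_lt hxy)
        simp [hxP, hxQ, hyP, hPQ']
        omega
      · by_cases hyQ : y = Q
        · simp [hxP, hxQ, hyQ, hQP']
          rcases lt_trichotomy x P with hlt | heq | hgt
          · have h3 : a x ≤ a P := ha (le_of_lt hlt)
            omega
          · exact absurd heq hxP
          · have hm := (hmid x hgt (by rw [← hyQ]; exact hxy)).2
            omega
        · have h3 : a x ≤ a y := ha (le_of_lt hxy)
          simp [hxP, hxQ, hyP, hyQ]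
          omega

lemma rename_mon (K : Type) [Field K] (n : ℕ) (σ : Equiv.Perm (Fin n)) (a : Fin n → ℕ) :
    rename (⇑σ) (mon K n a) = mon K n (a ∘ ⇑σ⁻¹) := by
  unfold mon
  rw [rename_monomial]
  have hd : Finsupp.mapDomain (⇑σ) (Finsupp.equivFunOnFinite.symm a)
      = Finsupp.equivFunOnFinite.symm (a ∘ ⇑σ⁻¹) := by
    ext b
    rw [Finsupp.mapDomain_equiv_apply]
    simp [Equiv.Perm.inv_def]
  rw [hd]

lemma mon_mem_span_iff (K : Type) [Field K] (n : ℕ) (S : Set (Fin n → ℕ)) (a : Fin n → ℕ) :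
    mon K n a ∈ Ideal.span (mon K n '' S) ↔ ∃ g ∈ S, ∀ i, g i ≤ a i := by
  classical
  have himg : mon K n '' S
      = (fun d => monomial d (1 : K)) '' (⇑Finsupp.equivFunOnFinite.symm '' S) := by
    rw [Set.image_image]; rfl
  rw [himg, mem_ideal_span_monomial_image]
  constructor
  · intro h
    have hsupp : Finsupp.equivFunOnFinite.symm a ∈ (mon K n a).support := by
      unfold mon; rw [support_monomial]; simp
    obtain ⟨si, hsi, hle⟩ := h _ hsupp
    obtain ⟨g, hg, rfl⟩ := hsi
    refine ⟨g, hg, fun i => ?_⟩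
    have := Finsupp.le_def.mp hle i
    simpa using this
  · rintro ⟨g, hg, hle⟩ xi hxi
    refine ⟨Finsupp.equivFunOnFinite.symm g, ⟨g, hg, rfl⟩, ?_⟩
    have hxi' : xi = Finsupp.equivFunOnFinite.symm a := by
      unfold mon at hxi; rw [support_monomial] at hxi; simp at hxi; exact hxi
    rw [hxi', Finsupp.le_def]
    intro i
    simpa using hle i

lemma swap_case (n : ℕ) (μ : Fin n → ℕ) (p q : Fin n) (h : μ q = μ p + 1) :
    borelMoveVec n μ p q = μ ∘ ⇑(Equiv.swap p q) := by
  have hpq' : p ≠ q := by intro h'; rw [h'] at h; omega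
  funext k
  by_cases hkp : k = p
  · rw [hkp]
    simp [borelMoveVec, Equiv.swap_apply_left, h]
  · by_cases hkq : k = q
    · rw [hkq]
      simp [borelMoveVec, Ne.symm hpq', Equiv.swap_apply_right, h]
    · simp [borelMoveVec, hkp, hkq, Equiv.swap_apply_of_ne_of_ne hkp hkq]

lemma move_perm (n : ℕ) (μ : Fin n → ℕ) (p q P Q : Fin n)
    (hP : μ P = μ p) (hQ : μ Q = μ q) (hpq : μ p < μ q) :
    borelMoveVec n μ p q = borelMoveVec n μ P Q ∘ ⇑(Equiv.swap p P * Equiv.swap q Q) := by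
  have hpq' : p ≠ q := by intro h'; rw [h'] at hpq; exact lt_irrefl _ hpq
  have hpQ : p ≠ Q := by intro h'; rw [h', hQ] at hpq; exact lt_irrefl _ hpq
  have hPq : P ≠ q := by intro h'; rw [← h', hP] at hpq; exact lt_irrefl _ hpq
  have hPQ : P ≠ Q := by intro h'; rw [h', hQ] at hP; rw [hP] at hpq; exact lt_irrefl _ hpq
  funext k
  simp only [Function.comp_apply, Equiv.Perm.mul_apply]
  by_cases hkp : k = p
  · rw [hkp, Equiv.swap_apply_of_ne_of_ne hpq' hpQ, Equiv.swap_apply_left]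
    simp [borelMoveVec, hP]
  · by_cases hkq : k = q
    · rw [hkq, Equiv.swap_apply_left,
        Equiv.swap_apply_of_ne_of_ne (Ne.symm hpQ) (Ne.symm hPQ)]
      simp [borelMoveVec, Ne.symm hpq', Ne.symm hPQ, hQ]
    · by_cases hkP : k = P
      · have hPp : P ≠ p := by rw [← hkP]; exact hkp
        rw [hkP, Equiv.swap_apply_of_ne_of_ne hPq hPQ, Equiv.swap_apply_right]
        simp [borelMoveVec, hPp, hPq, Ne.symm hPp, hpQ, hP]
      · by_cases hkQ : k = Q
        · have hQq : Q ≠ q := by rw [← hkQ]; exact hkq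
          rw [hkQ, Equiv.swap_apply_right,
            Equiv.swap_apply_of_ne_of_ne (Ne.symm hpq') (Ne.symm hPq)]
          simp [borelMoveVec, Ne.symm hpQ, hQq, Ne.symm hQq, Ne.symm hPq, hQ]
        · rw [Equiv.swap_apply_of_ne_of_ne hkq hkQ, Equiv.swap_apply_of_ne_of_ne hkp hkP]
          simp [borelMoveVec, hkp, hkq, hkP, hkQ]

lemma borel_comp (n : ℕ) (μ : Fin n → ℕ) (σ : Equiv.Perm (Fin n)) (i j : Fin n) :
    borelMoveVec n (μ ∘ ⇑σ⁻¹) i j = (borelMoveVec n μ (σ⁻¹ i) (σ⁻¹ j)) ∘ ⇑σ⁻¹ := by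
  funext k
  simp only [borelMoveVec, Function.comp_apply, EmbeddingLike.apply_eq_iff_eq]

lemma key (K : Type) [Field K] (n : ℕ) {J : Ideal (MvPolynomial (Fin n) K)}
    (hbor : ∀ lam : Fin n → ℕ, Monotone lam → mon K n lam ∈ J →
      ∀ i j : Fin n, i < j → lam i < lam j → mon K n (borelMoveVec n lam i j) ∈ J)
    (μ : Fin n → ℕ) (hμ : Monotone μ) :
    ∀ (D : ℕ) (lam : Fin n → ℕ), Monotone lam →
      (∀ k, Tl n μ k ≤ Tl n lam k) → Tl n μ 0 = Tl n lam 0 →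
      (∑ k ∈ Finset.range n, (Tl n lam k - Tl n μ k)) = D →
      mon K n lam ∈ J → mon K n μ ∈ J := by
  classical
  intro D
  induction D using Nat.strong_induction_on with
  | _ D IH =>
  intro lam hlam hdom hsum hD hmem
  by_cases hall : ∀ k, Tl n μ k = Tl n lam k
  · have heq : μ = lam := eq_of_Tl n μ lam hall
    rw [heq]; exact hmem
  · push_neg at hall
    obtain ⟨k0, hk0⟩ := hall
    have hk0' : Tl n μ k0 < Tl n lam k0 := lt_of_le_of_ne (hdom k0) hk0
    have hk0n : k0 < n := by
      by_contra hc
      rw [Tl_of_ge n μ k0 (le_of_not_gt hc), Tl_of_ge n lam k0 (le_of_not_gt hc)] at hk0'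
      exact absurd hk0' (lt_irrefl 0)
    have hk0pos : 0 < k0 := by
      rcases Nat.eq_zero_or_pos k0 with h | h
      · rw [h] at hk0; exact absurd hsum hk0
      · exact h
    -- p : largest index ≤ k0 - 1 where tails agree
    set p := Nat.findGreatest (fun k => Tl n μ k = Tl n lam k) (k0 - 1) with hpdef
    have hp_spec : Tl n μ p = Tl n lam p :=
      Nat.findGreatest_spec (P := fun k => Tl n μ k = Tl n lam k) (Nat.zero_le _) hsum
    have hp_le : p ≤ k0 - 1 := Nat.findGreatest_le (P := fun k => Tl n μ k = Tl n lam k) _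
    -- q : via Nat.find
    have hQex : ∃ jj, Tl n μ (k0 + 1 + jj) = Tl n lam (k0 + 1 + jj) :=
      ⟨n, by rw [Tl_of_ge n μ _ (by omega), Tl_of_ge n lam _ (by omega)]⟩
    set jq := Nat.find hQex with hjqdef
    set q := k0 + jq with hqdef
    have hq1 : Tl n μ (q + 1) = Tl n lam (q + 1) := by
      have := Nat.find_spec hQex
      have e : q + 1 = k0 + 1 + jq := by omega
      rw [e]; exact this
    have hstr : ∀ k, p < k → k ≤ q → Tl n μ k < Tl n lam k := by
      intro k h1 h2
      refine lt_of_le_of_ne (hdom k) ?_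
      intro heq
      rcases lt_trichotomy k k0 with hlt | rfl | hgt
      · exact Nat.findGreatest_is_greatest (P := fun k => Tl n μ k = Tl n lam k) h1 (by omega) heq
      · exact hk0 heq
      · have hk' : k - k0 - 1 < jq := by omega
        have he : k = k0 + 1 + (k - k0 - 1) := by omega
        exact Nat.find_min hQex hk' (by rw [← he]; exact heq)
    have hpq : p < q := by omega
    have hqn : q < n := by
      by_contra hc
      have := hstr q hpq (le_refl q)
      rw [Tl_of_ge n μ q (le_of_not_gt hc), Tl_of_ge n lam q (le_of_not_gt hc)] at this
      exact absurd this (lt_irrefl 0)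
    have hpn : p < n := by omega
    -- boundary values
    have e1 := Tl_succ n μ p hpn
    have e2 := Tl_succ n lam p hpn
    have e3 := Tl_succ n μ q hqn
    have e4 := Tl_succ n lam q hqn
    have hsp : Tl n μ (p + 1) < Tl n lam (p + 1) := hstr (p + 1) (by omega) (by omega)
    have hsq : Tl n μ q < Tl n lam q := hstr q hpq (le_refl q)
    have hpv : lam ⟨p, hpn⟩ < μ ⟨p, hpn⟩ := by omega
    have hqv : μ ⟨q, hqn⟩ < lam ⟨q, hqn⟩ := by omega
    have hμpq : μ ⟨p, hpn⟩ ≤ μ ⟨q, hqn⟩ := hμ (by simp [Fin.le_def]; omega)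
    have hval : lam ⟨p, hpn⟩ + 2 ≤ lam ⟨q, hqn⟩ := by omega
    -- refined positions p', q'
    set L : ℕ → ℕ := fun k => Tl n lam k - Tl n lam (k + 1) with hLdef
    have hL : ∀ (k : ℕ) (h : k < n), L k = lam ⟨k, h⟩ := by
      intro k h
      have := Tl_succ n lam k h
      simp only [hLdef]
      omega
    set p' := Nat.findGreatest (fun k => L k = L p) (q - 1) with hp'def
    have hp'_spec : L p' = L p :=
      Nat.findGreatest_spec (P := fun k => L k = L p) (by omega : p ≤ q - 1) rfl
    have hp'_ge : p ≤ p' := Nat.le_findGreatest (P := fun k => L k = L p) (by omega) rfl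
    have hp'_le : p' ≤ q - 1 := Nat.findGreatest_le (P := fun k => L k = L p) _
    have hQ'ex : ∃ jj, L (p' + 1 + jj) = L q :=
      ⟨q - p' - 1, by rw [(by omega : p' + 1 + (q - p' - 1) = q)]⟩
    set jq' := Nat.find hQ'ex with hjq'def
    set q' := p' + 1 + jq' with hq'def
    have hq'col : L q' = L q := Nat.find_spec hQ'ex
    have hq'_le : q' ≤ q := by
      have := Nat.find_min' hQ'ex (by rw [(by omega : p' + 1 + (q - p' - 1) = q)])
      omega
    have hp'q' : p' < q' := by omega
    have hq'n : q' < n := by omega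
    have hp'n : p' < n := by omega
    set P : Fin n := ⟨p', hp'n⟩ with hPdef
    set Q : Fin n := ⟨q', hq'n⟩ with hQdef
    have hlamP : lam P = lam ⟨p, hpn⟩ := by
      have h1 : L p' = lam P := hL p' hp'n
      rw [← h1, hp'_spec, hL p hpn]
    have hlamQ : lam Q = lam ⟨q, hqn⟩ := by
      have h1 : L q' = lam Q := hL q' hq'n
      rw [← h1, hq'col, hL q hqn]
    have hPQ : P < Q := by simp [hPdef, hQdef, Fin.lt_def]; omega
    have hval2 : lam P + 2 ≤ lam Q := by rw [hlamP, hlamQ]; exact hval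
    have hmid : ∀ k : Fin n, P < k → k < Q → lam P < lam k ∧ lam k < lam Q := by
      intro k h1 h2
      have hk1 : p' < (k : ℕ) := h1
      have hk2 : (k : ℕ) < q' := h2
      constructor
      · have hle : lam P ≤ lam k := hlam (le_of_lt h1)
        have hne : lam k ≠ lam ⟨p, hpn⟩ := by
          intro hc
          apply Nat.findGreatest_is_greatest (n := q - 1)
            (P := fun k => L k = L p) hk1 (by omega)
          show L (k : ℕ) = L p
          rw [hL (k : ℕ) k.isLt, hL p hpn]
          simpa using hc
        rw [hlamP] at hle ⊢
        exact lt_of_le_of_ne hle (Ne.symm hne)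
      · have hle : lam k ≤ lam Q := hlam (le_of_lt h2)
        have hne : lam k ≠ lam ⟨q, hqn⟩ := by
          intro hc
          have hk' : (k : ℕ) - p' - 1 < jq' := by omega
          apply Nat.find_min hQ'ex hk'
          show L (p' + 1 + ((k : ℕ) - p' - 1)) = L q
          rw [(by omega : p' + 1 + ((k : ℕ) - p' - 1) = (k : ℕ)),
            hL (k : ℕ) k.isLt, hL q hqn]
          simpa using hc
        rw [hlamQ] at hle ⊢
        exact lt_of_le_of_ne hle hne
    set ν := borelMoveVec n lam P Q with hνdef
    have hνmono : Monotone ν := borel_monotone n lam hlam P Q hPQ hval2 hmid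
    have hlamPQ : lam P < lam Q := by omega
    have hνmem : mon K n ν ∈ J := hbor lam hlam hmem P Q hPQ hlamPQ
    have hQ1 : 1 ≤ lam Q := by omega
    have hTν : ∀ k, Tl n ν k + (if k ≤ q' then 1 else 0)
        = Tl n lam k + (if k ≤ p' then 1 else 0) :=
      Tl_borel n lam P Q (ne_of_lt hPQ) hQ1
    clear_value ν P Q q' jq' p' L q jq p
    have hν_le_lam : ∀ k, Tl n ν k ≤ Tl n lam k := by
      intro k
      have h := hTν k
      by_cases h1 : k ≤ p'
      · rw [if_pos h1, if_pos (by omega : k ≤ q')] at h; omega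
      · by_cases h2 : k ≤ q'
        · rw [if_neg h1, if_pos h2] at h; omega
        · rw [if_neg h1, if_neg h2] at h; omega
    have hν_dom : ∀ k, Tl n μ k ≤ Tl n ν k := by
      intro k
      have h := hTν k
      by_cases h1 : k ≤ p'
      · rw [if_pos h1, if_pos (by omega : k ≤ q')] at h
        have := hdom k; omega
      · by_cases h2 : k ≤ q'
        · rw [if_neg h1, if_pos h2] at h
          have := hstr k (by omega) (by omega)
          omega
        · rw [if_neg h1, if_neg h2] at h
          have := hdom k; omega
    have hν_sum : Tl n μ 0 = Tl n ν 0 := by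
      have h := hTν 0
      rw [if_pos (Nat.zero_le _), if_pos (Nat.zero_le _)] at h
      omega
    have hmeas : (∑ k ∈ Finset.range n, (Tl n ν k - Tl n μ k)) < D := by
      rw [← hD]
      apply Finset.sum_lt_sum
      · intro k _
        exact Nat.sub_le_sub_right (hν_le_lam k) _
      · refine ⟨q', Finset.mem_range.mpr hq'n, ?_⟩
        have h := hTν q'
        rw [if_neg (by omega : ¬ q' ≤ p'), if_pos (le_refl q')] at h
        have := hstr q' (by omega) (by omega)
        omega
    exact IH _ hmeas ν hνmono hν_dom hν_sum rfl hνmem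

/-- For a set `B ⊆ P_n` of partitions, the smallest symmetric strongly shifted
ideal containing `{x^λ : λ ∈ B}` is generated by all monomials `σ(x^μ)` with
`σ ∈ 𝔖_n`, `μ ∈ P_n`, for which there is a `λ ∈ B` with `|λ| = |μ|` and
`μ ⊴ λ` in the dominance order. -/
theorem sss_generators (K : Type) [Field K] (n : ℕ) (B : Set (Fin n → ℕ))
    (hB : ∀ lam ∈ B, Monotone lam) :
    Sss K n B =
      Ideal.span {f | ∃ (σ : Equiv.Perm (Fin n)) (μ : Fin n → ℕ), Monotone μ ∧
        (∃ lam ∈ B, ∑ i, lam i = ∑ i, μ i ∧ dominates n μ lam) ∧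
        f = rename (σ : Fin n → Fin n) (mon K n μ)} := by
  classical
  set G : Set (MvPolynomial (Fin n) K) :=
    {f | ∃ (σ : Equiv.Perm (Fin n)) (μ : Fin n → ℕ), Monotone μ ∧
      (∃ lam ∈ B, ∑ i, lam i = ∑ i, μ i ∧ dominates n μ lam) ∧
      f = rename (σ : Fin n → Fin n) (mon K n μ)} with hGdef
  set S : Set (Fin n → ℕ) :=
    {g | ∃ (σ : Equiv.Perm (Fin n)) (μ : Fin n → ℕ), Monotone μ ∧
      (∃ lam ∈ B, ∑ i, lam i = ∑ i, μ i ∧ dominates n μ lam) ∧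
      g = μ ∘ ⇑σ⁻¹} with hSdef
  have hGS : G = mon K n '' S := by
    ext f
    constructor
    · rintro ⟨σ, μ, h1, h2, rfl⟩
      exact ⟨μ ∘ ⇑σ⁻¹, ⟨σ, μ, h1, h2, rfl⟩, (rename_mon K n σ μ).symm⟩
    · rintro ⟨g, ⟨σ, μ, h1, h2, rfl⟩, rfl⟩
      exact ⟨σ, μ, h1, h2, (rename_mon K n σ μ).symm⟩
  -- span G is symmetric
  have hsym : IsSymmetricIdeal K n (Ideal.span G) := by
    intro τ
    rw [Ideal.map_span]
    congr 1
    ext f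
    constructor
    · rintro ⟨f0, ⟨σ, μ, h1, h2, rfl⟩, rfl⟩
      refine ⟨τ * σ, μ, h1, h2, ?_⟩
      rw [rename_rename]
      rfl
    · rintro ⟨σ, μ, h1, h2, rfl⟩
      refine ⟨rename ⇑(τ⁻¹ * σ) (mon K n μ), ⟨τ⁻¹ * σ, μ, h1, h2, rfl⟩, ?_⟩
      rw [rename_rename]
      congr 1
      ext x
      simp
  -- span G is closed under Borel moves
  have hborG : ∀ lam : Fin n → ℕ, Monotone lam → mon K n lam ∈ Ideal.span G →
      ∀ i j : Fin n, i < j → lam i < lam j →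
        mon K n (borelMoveVec n lam i j) ∈ Ideal.span G := by
    intro lam hlam hmem i j hij hval
    rw [hGS, mon_mem_span_iff] at hmem ⊢
    obtain ⟨g, hgS, hgle⟩ := hmem
    obtain ⟨σ, μ, hμmono, hcond, hgdef⟩ := hgS
    by_cases hcase : g j < lam j
    · refine ⟨g, ⟨σ, μ, hμmono, hcond, hgdef⟩, fun k => ?_⟩
      simp only [borelMoveVec]
      by_cases h1 : k = i
      · subst h1
        rw [if_pos rfl]
        have := hgle k
        omega
      · rw [if_neg h1]
        by_cases h2 : k = j
        · subst h2
          rw [if_pos rfl]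
          omega
        · rw [if_neg h2]
          exact hgle k
    · have hgj : g j = lam j := le_antisymm (hgle j) (le_of_not_gt hcase)
      set p : Fin n := σ⁻¹ i with hpdef
      set q : Fin n := σ⁻¹ j with hqdef
      have hμp : μ p = g i := by rw [hgdef]; rfl
      have hμq : μ q = g j := by rw [hgdef]; rfl
      have hplq : μ p < μ q := by
        rw [hμp, hμq, hgj]
        exact lt_of_le_of_lt (hgle i) hval
      -- find a partition form of the moved exponent
      have hstep : ∃ (π : Equiv.Perm (Fin n)) (ν : Fin n → ℕ), Monotone ν ∧
          (∃ lam0 ∈ B, ∑ i, lam0 i = ∑ i, ν i ∧ dominates n ν lam0) ∧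
          borelMoveVec n μ p q = ν ∘ ⇑π := by
        by_cases hadj : μ q = μ p + 1
        · exact ⟨Equiv.swap p q, μ, hμmono, hcond, swap_case n μ p q hadj⟩
        · have hgap : μ p + 2 ≤ μ q := by omega
          have hn : 0 < n := i.pos
          set M : ℕ → ℕ := fun k => Tl n μ k - Tl n μ (k + 1) with hMdef
          have hM : ∀ (k : ℕ) (h : k < n), M k = μ ⟨k, h⟩ := by
            intro k h
            have := Tl_succ n μ k h
            simp only [hMdef]
            omega
          set ps := Nat.findGreatest (fun k => M k = M (p : ℕ)) (n - 1) with hpsdef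
          have hps_spec : M ps = M (p : ℕ) :=
            Nat.findGreatest_spec (P := fun k => M k = M (p : ℕ))
              (by have := p.isLt; omega : (p : ℕ) ≤ n - 1) rfl
          have hps_ge : (p : ℕ) ≤ ps :=
            Nat.le_findGreatest (P := fun k => M k = M (p : ℕ)) (by have := p.isLt; omega) rfl
          have hps_le : ps ≤ n - 1 := Nat.findGreatest_le (P := fun k => M k = M (p : ℕ)) _
          have hpsn : ps < n := by omega
          have hQsex : ∃ k, M k = M (q : ℕ) := ⟨(q : ℕ), rfl⟩
          set qs := Nat.find hQsex with hqsdef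
          have hqs_spec : M qs = M (q : ℕ) := Nat.find_spec hQsex
          have hqs_le : qs ≤ (q : ℕ) := Nat.find_min' hQsex rfl
          have hqsn : qs < n := by have := q.isLt; omega
          set Ps : Fin n := ⟨ps, hpsn⟩ with hPsdef
          set Qs : Fin n := ⟨qs, hqsn⟩ with hQsdef
          have hμPs : μ Ps = μ p := by
            have h1 : M ps = μ Ps := hM ps hpsn
            have h2 : M (p : ℕ) = μ p := by rw [hM (p : ℕ) p.isLt, Fin.eta]
            rw [← h1, ← h2]; exact hps_spec
          have hμQs : μ Qs = μ q := by
            have h1 : M qs = μ Qs := hM qs hqsn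
            have h2 : M (q : ℕ) = μ q := by rw [hM (q : ℕ) q.isLt, Fin.eta]
            rw [← h1, ← h2]; exact hqs_spec
          have hPsQs : Ps < Qs := by
            rw [Fin.lt_def]
            by_contra hc
            have : Qs ≤ Ps := by rw [Fin.le_def]; omega
            have := hμmono this
            rw [hμPs, hμQs] at this
            omega
          have hval2 : μ Ps + 2 ≤ μ Qs := by rw [hμPs, hμQs]; omega
          have hmid : ∀ k : Fin n, Ps < k → k < Qs → μ Ps < μ k ∧ μ k < μ Qs := by
            intro k h1 h2
            have hk1 : ps < (k : ℕ) := h1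
            have hk2 : (k : ℕ) < qs := h2
            constructor
            · have hle : μ Ps ≤ μ k := hμmono (le_of_lt h1)
              have hne : μ k ≠ μ p := by
                intro hc
                apply Nat.findGreatest_is_greatest (n := n - 1)
                  (P := fun k => M k = M (p : ℕ)) hk1 (by have := k.isLt; omega)
                show M (k : ℕ) = M (p : ℕ)
                rw [hM (k : ℕ) k.isLt, hM (p : ℕ) p.isLt, Fin.eta]
                simpa using hc
              rw [hμPs] at hle ⊢
              exact lt_of_le_of_ne hle (Ne.symm hne)
            · have hle : μ k ≤ μ Qs := hμmono (le_of_lt h2)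
              have hne : μ k ≠ μ q := by
                intro hc
                apply Nat.find_min hQsex hk2
                show M (k : ℕ) = M (q : ℕ)
                rw [hM (k : ℕ) k.isLt, hM (q : ℕ) q.isLt, Fin.eta]
                simpa using hc
              rw [hμQs] at hle ⊢
              exact lt_of_le_of_ne hle hne
          set ν := borelMoveVec n μ Ps Qs with hνdef
          have hνmono : Monotone ν := borel_monotone n μ hμmono Ps Qs hPsQs hval2 hmid
          have hQs1 : 1 ≤ μ Qs := by rw [hμQs]; omega
          have hTν : ∀ k, Tl n ν k + (if k ≤ qs then 1 else 0)
              = Tl n μ k + (if k ≤ ps then 1 else 0) :=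
            Tl_borel n μ Ps Qs (ne_of_lt hPsQs) hQs1
          have hpsqs : ps < qs := Fin.lt_def.mp hPsQs
          have hνeq0 : borelMoveVec n μ p q
              = ν ∘ ⇑(Equiv.swap p Ps * Equiv.swap q Qs) :=
            move_perm n μ p q Ps Qs hμPs hμQs hplq
          clear_value ν Ps Qs qs ps M
          obtain ⟨lam0, hlam0B, hsum0, hdom0⟩ := hcond
          refine ⟨Equiv.swap p Ps * Equiv.swap q Qs, ν, hνmono,
            ⟨lam0, hlam0B, ?_, ?_⟩, hνeq0⟩
          · -- sums
            have h := hTν 0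
            rw [if_pos (Nat.zero_le _), if_pos (Nat.zero_le _)] at h
            have z1 : Tl n ν 0 = ∑ i, ν i := Tl_zero n ν
            have z2 : Tl n μ 0 = ∑ i, μ i := Tl_zero n μ
            have z0 : (∑ i, lam0 i) = ∑ i, μ i := hsum0
            omega
          · -- dominance
            apply dominates_of_Tl
            intro k
            have h := hTν k
            have hd := Tl_le_of_dominates n μ lam0 hdom0 k
            by_cases h1 : k ≤ ps
            · rw [if_pos h1, if_pos (by omega : k ≤ qs)] at h
              omega
            · by_cases h2 : k ≤ qs
              · rw [if_neg h1, if_pos h2] at h; omega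
              · rw [if_neg h1, if_neg h2] at h; omega
      obtain ⟨π, ν, hνmono, hνcond, hνeq⟩ := hstep
      refine ⟨ν ∘ ⇑((π * σ⁻¹)⁻¹)⁻¹, ⟨(π * σ⁻¹)⁻¹, ν, hνmono, hνcond, rfl⟩, fun k => ?_⟩
      have ha' : (ν ∘ ⇑((π * σ⁻¹)⁻¹)⁻¹) = borelMoveVec n g i j := by
        rw [inv_inv]
        have h1 : g = μ ∘ ⇑σ⁻¹ := hgdef
        rw [h1, borel_comp n μ σ i j, ← hpdef, ← hqdef, hνeq]
        rfl
      rw [ha']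
      simp only [borelMoveVec]
      by_cases h1 : k = i
      · subst h1
        rw [if_pos rfl, if_pos rfl]
        have := hgle k
        omega
      · rw [if_neg h1, if_neg h1]
        by_cases h2 : k = j
        · subst h2
          rw [if_pos rfl, if_pos rfl]
          omega
        · rw [if_neg h2, if_neg h2]
          exact hgle k
  apply le_antisymm
  · apply sInf_le
    constructor
    · exact ⟨⟨S, by rw [hGS]⟩, hsym, hborG⟩
    · intro lam hlamB
      apply Ideal.subset_span
      exact ⟨1, lam, hB lam hlamB, ⟨lam, hlamB, rfl, fun k => le_refl _⟩,
        by rw [Equiv.Perm.coe_one, rename_id, AlgHom.id_apply]⟩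
  · apply le_sInf
    rintro J ⟨⟨hJmon, hJsym, hJbor⟩, hJB⟩
    rw [Ideal.span_le]
    rintro f ⟨σ, μ, hμmono, ⟨lam0, hlam0, hsum0, hdom0⟩, rfl⟩
    have hμJ : mon K n μ ∈ J := by
      refine key K n hJbor μ hμmono _ lam0 (hB lam0 hlam0)
        (Tl_le_of_dominates n μ lam0 hdom0) ?_ rfl (hJB lam0 hlam0)
      rw [Tl_zero, Tl_zero]
      exact hsum0.symm
    have hmap := hJsym σ
    rw [← hmap]
    exact Ideal.mem_map_of_mem _ hμJ
end

section
/- The Newton polytope of the principal Borel symmetric strongly shifted ideal Sss({λ}) equals the permutohedron P(λ) = conv{(λ_{σ(1)},...,λ_{σ(n)}) : σ ∈ 𝔖_n}. -/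
set_option maxHeartbeats 1600000

open Finset

namespace NPerm

variable {n : ℕ}

def T (n : ℕ) (f : Fin n → ℕ) (k : ℕ) : ℕ :=
  ∑ i ∈ Finset.univ.filter (fun i : Fin n => k ≤ (i : ℕ)), f i

lemma T_zero (f : Fin n → ℕ) : T n f 0 = ∑ i, f i := by
  simp [T]

lemma T_of_le (f : Fin n → ℕ) {k : ℕ} (hk : n ≤ k) : T n f k = 0 := by
  rw [T, Finset.sum_eq_zero]
  intro i hi
  simp only [Finset.mem_filter, Finset.mem_univ, true_and] at hi
  omega

lemma T_succ (f : Fin n → ℕ) {k : ℕ} (hk : k < n) :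
    T n f k = f ⟨k, hk⟩ + T n f (k + 1) := by
  have h : Finset.univ.filter (fun i : Fin n => k ≤ (i : ℕ)) =
      insert (⟨k, hk⟩ : Fin n) (Finset.univ.filter (fun i : Fin n => k + 1 ≤ (i : ℕ))) := by
    ext x
    simp only [Finset.mem_filter, Finset.mem_univ, true_and, Finset.mem_insert, Fin.ext_iff]
    omega
  rw [T, h, Finset.sum_insert (by simp), T]

lemma T_eq_Ici (f : Fin n → ℕ) {k : ℕ} (hk : k < n) :
    T n f k = ∑ i ∈ Finset.Ici (⟨k, hk⟩ : Fin n), f i := by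
  apply Finset.sum_congr _ (fun _ _ => rfl)
  ext x
  simp [Fin.le_def]

lemma hull_perm_inv (lam : Fin n → ℕ) (τ : Equiv.Perm (Fin n)) {x : Fin n → ℝ}
    (hx : x ∈ convexHull ℝ {v : Fin n → ℝ | ∃ σ : Equiv.Perm (Fin n), v = fun k => (lam (σ k) : ℝ)}) :
    (x ∘ τ) ∈ convexHull ℝ {v : Fin n → ℝ | ∃ σ : Equiv.Perm (Fin n), v = fun k => (lam (σ k) : ℝ)} := by
  set S := {v : Fin n → ℝ | ∃ σ : Equiv.Perm (Fin n), v = fun k => (lam (σ k) : ℝ)} with hS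
  have key : convexHull ℝ S ⊆ (LinearMap.funLeft ℝ ℝ τ) ⁻¹' (convexHull ℝ S) := by
    apply convexHull_min
    · rintro v ⟨σ, rfl⟩
      apply subset_convexHull
      exact ⟨τ.trans σ, rfl⟩
    · exact (convex_convexHull ℝ S).linear_preimage _
  exact key hx

lemma key (lam : Fin n → ℕ) (hlam : Monotone lam) :
    ∀ (d : ℕ) (μ : Fin n → ℕ), Monotone μ → (∑ i, μ i = ∑ i, lam i) →
      (∀ k : ℕ, T n μ k ≤ T n lam k) →
      (∑ k ∈ Finset.range n, (T n lam k - T n μ k)) = d →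
      (fun k => (μ k : ℝ)) ∈ convexHull ℝ
        {v : Fin n → ℝ | ∃ σ : Equiv.Perm (Fin n), v = fun k => (lam (σ k) : ℝ)} := by
  intro d
  induction d using Nat.strong_induction_on with
  | _ d ih =>
    intro μ hμ hsum hdom hd
    by_cases heq : ∀ k : ℕ, T n μ k = T n lam k
    · have hμlam : μ = lam := by
        funext k
        have h1 := T_succ μ k.isLt
        have h2 := T_succ lam k.isLt
        have e1 := heq (k : ℕ)
        have e2 := heq ((k : ℕ) + 1)
        have : (⟨(k : ℕ), k.isLt⟩ : Fin n) = k := by simp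
        rw [this] at h1 h2
        omega
      rw [hμlam]
      exact subset_convexHull ℝ _ ⟨1, by simp⟩
    · push_neg at heq
      obtain ⟨k0, hk0ne⟩ := heq
      have hk0lt : T n μ k0 < T n lam k0 := lt_of_le_of_ne (hdom k0) hk0ne
      have hk0n : k0 < n := by
        by_contra h
        rw [T_of_le μ (by omega), T_of_le lam (by omega)] at hk0lt
        omega
      have hk0pos : 0 < k0 := by
        rcases Nat.eq_zero_or_pos k0 with h | h
        · exfalso; rw [h, T_zero, T_zero, hsum] at hk0lt; omega
        · exact h
      -- greatest index i ≤ k0 - 1 with equality of tails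
      have hP0 : T n μ 0 = T n lam 0 := by rw [T_zero, T_zero, hsum]
      obtain ⟨i, hPi, hile, hno1⟩ :
          ∃ i, T n μ i = T n lam i ∧ i ≤ k0 - 1 ∧
            ∀ k, i < k → k ≤ k0 - 1 → ¬ (T n μ k = T n lam k) := by
        classical
        refine ⟨Nat.findGreatest (fun k => T n μ k = T n lam k) (k0 - 1), ?_, ?_, ?_⟩
        · exact Nat.findGreatest_spec (P := fun k => T n μ k = T n lam k) (Nat.zero_le _) hP0
        · exact Nat.findGreatest_le _
        · intro k h1 h2
          exact Nat.findGreatest_is_greatest (P := fun k => T n μ k = T n lam k) h1 h2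
      have hik0 : i < k0 := by omega
      -- least index c > k0 with equality of tails
      have hPn : T n μ n = T n lam n := by rw [T_of_le μ le_rfl, T_of_le lam le_rfl]
      obtain ⟨c, hck0, hPc, hcle, hno2⟩ :
          ∃ c, k0 < c ∧ T n μ c = T n lam c ∧ c ≤ n ∧
            ∀ k, k < c → k0 < k → ¬ (T n μ k = T n lam k) := by
        classical
        have hex : ∃ k, k0 < k ∧ T n μ k = T n lam k := ⟨n, hk0n, hPn⟩
        refine ⟨Nat.find hex, (Nat.find_spec hex).1, (Nat.find_spec hex).2, Nat.find_le ⟨hk0n, hPn⟩, ?_⟩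
        intro k h1 h2
        have := Nat.find_min hex h1
        tauto
      set j := c - 1 with hj
      have hjc : j + 1 = c := by omega
      have hijlt : i < j := by omega
      have hjn : j < n := by omega
      -- strict inequality on the interval (i, j]
      have hstrict : ∀ k, i < k → k ≤ j → T n μ k < T n lam k := by
        intro k h1 h2
        refine lt_of_le_of_ne (hdom k) ?_
        rcases lt_trichotomy k k0 with h | h | h
        · exact hno1 k h1 (by omega)
        · rw [h]; exact hk0ne
        · exact hno2 k (by omega) h
      set iF : Fin n := ⟨i, by omega⟩ with hiF
      set jF : Fin n := ⟨j, hjn⟩ with hjF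
      have hiFjF : iF ≠ jF := by
        simp only [hiF, hjF, ne_eq, Fin.mk.injEq]; omega
      set ν : Fin n → ℕ :=
        Function.update (Function.update μ jF (μ jF + 1)) iF (μ iF - 1) with hν
      have hνi : ν iF = μ iF - 1 := by rw [hν, Function.update_self]
      have hνj : ν jF = μ jF + 1 := by
        rw [hν, Function.update_of_ne (Ne.symm hiFjF), Function.update_self]
      have hνo : ∀ x, x ≠ iF → x ≠ jF → ν x = μ x := by
        intro x h1 h2
        rw [hν, Function.update_of_ne h1, Function.update_of_ne h2]
      -- μ iF > lam iF, in particular μ iF ≥ 1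
      have hμipos : lam iF < μ iF := by
        have e1 : T n μ i = T n lam i := hPi
        have e2 : T n μ (i + 1) < T n lam (i + 1) := hstrict (i + 1) (by omega) (by omega)
        have h1 : T n μ i = μ iF + T n μ (i + 1) := T_succ μ (by omega)
        have h2 : T n lam i = lam iF + T n lam (i + 1) := T_succ lam (by omega)
        omega
      have hμi1 : 1 ≤ μ iF := by omega
      -- values below iF are strictly smaller
      have hprev : ∀ k : Fin n, k < iF → μ k < μ iF := by
        intro k hk
        have hipos : 0 < i := by
          have := hk
          rw [Fin.lt_def] at this
          simp only [hiF] at this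
          omega
        have e0 : T n μ (i - 1) ≤ T n lam (i - 1) := hdom _
        have e1 : T n μ i = T n lam i := hPi
        have h1 := T_succ μ (show i - 1 < n by omega)
        have h2 := T_succ lam (show i - 1 < n by omega)
        have hstep : i - 1 + 1 = i := by omega
        have h3 : T n μ (i - 1 + 1) = T n μ i := congrArg (T n μ) hstep
        have h4 : T n lam (i - 1 + 1) = T n lam i := congrArg (T n lam) hstep
        have hμle : μ ⟨i - 1, by omega⟩ ≤ lam ⟨i - 1, by omega⟩ := by omega
        have hk' : k ≤ (⟨i - 1, by omega⟩ : Fin n) := by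
          rw [Fin.le_def]; rw [Fin.lt_def] at hk; simp only [hiF] at hk ⊢; omega
        calc μ k ≤ μ ⟨i - 1, by omega⟩ := hμ hk'
          _ ≤ lam ⟨i - 1, by omega⟩ := hμle
          _ ≤ lam iF := hlam (by rw [Fin.le_def]; simp only [hiF]; omega)
          _ < μ iF := hμipos
      -- values above jF are strictly bigger
      have hnext : ∀ k : Fin n, jF < k → μ jF + 1 ≤ μ k := by
        intro k hk
        have hj1n : j + 1 < n := by
          rw [Fin.lt_def] at hk
          simp only [hjF] at hk
          have := k.isLt
          omega
        have e1 : T n μ j < T n lam j := hstrict j (by omega) le_rfl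
        have e2 : T n μ (j + 1) = T n lam (j + 1) := by
          have a1 : T n μ (j + 1) = T n μ c := congrArg (T n μ) hjc
          have a2 : T n lam (j + 1) = T n lam c := congrArg (T n lam) hjc
          omega
        have e3 : T n μ (j + 2) ≤ T n lam (j + 2) := hdom _
        have h1 : T n μ j = μ jF + T n μ (j + 1) := T_succ μ hjn
        have h2 : T n lam j = lam jF + T n lam (j + 1) := T_succ lam hjn
        have h3 := T_succ μ hj1n
        have h4 := T_succ lam hj1n
        have h5 : T n μ (j + 1 + 1) = T n μ (j + 2) := congrArg (T n μ) rfl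
        have h6 : T n lam (j + 1 + 1) = T n lam (j + 2) := congrArg (T n lam) rfl
        have hjj : μ jF < lam jF := by omega
        have hjj1 : lam ⟨j + 1, hj1n⟩ ≤ μ ⟨j + 1, hj1n⟩ := by omega
        have hk' : (⟨j + 1, hj1n⟩ : Fin n) ≤ k := by
          rw [Fin.le_def]; rw [Fin.lt_def] at hk; simp only [hjF] at hk; simp only; omega
        calc μ jF + 1 ≤ lam jF := hjj
          _ ≤ lam ⟨j + 1, hj1n⟩ := hlam (by rw [Fin.le_def]; simp only [hjF]; omega)
          _ ≤ μ ⟨j + 1, hj1n⟩ := hjj1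
          _ ≤ μ k := hμ hk'
      -- monotonicity of ν
      have hiFltjF : iF < jF := by
        rw [Fin.lt_def]; simp only [hiF, hjF]; omega
      have hνmono : Monotone ν := by
        intro a b hab
        by_cases hbi : b = iF
        · subst hbi
          by_cases hai : a = iF
          · subst hai; exact le_refl _
          · have ha : a < iF := lt_of_le_of_ne hab hai
            have haj : a ≠ jF := by
              intro h; rw [h] at ha; exact absurd (ha.trans hiFltjF) (lt_irrefl _)
            rw [hνo a hai haj, hνi]
            have := hprev a ha
            omega
        · have hνb : μ b ≤ ν b := by
            by_cases hbj : b = jF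
            · subst hbj; rw [hνj]; omega
            · rw [hνo b hbi hbj]
          by_cases haj : a = jF
          · subst haj
            by_cases hbj : b = jF
            · subst hbj; exact le_refl _
            · have hb : jF < b := lt_of_le_of_ne hab (fun h => hbj h.symm)
              rw [hνj, hνo b hbi hbj]
              exact hnext b hb
          · have hνa : ν a ≤ μ a := by
              by_cases hai : a = iF
              · subst hai; rw [hνi]; omega
              · rw [hνo a hai haj]
            calc ν a ≤ μ a := hνa
              _ ≤ μ b := hμ hab
              _ ≤ ν b := hνb
      -- sum of ν equals sum of lam
      have hνsum : ∑ x, ν x = ∑ x, lam x := by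
        have hjmem : jF ∈ Finset.univ \ {iF} := by
          simp [Finset.mem_sdiff, Ne.symm hiFjF]
        have s1 : ∑ x, ν x =
            (μ iF - 1) + ∑ x ∈ Finset.univ \ {iF}, Function.update μ jF (μ jF + 1) x := by
          rw [hν]; exact Finset.sum_update_of_mem (Finset.mem_univ iF) _ _
        have s2 : ∑ x ∈ Finset.univ \ {iF}, Function.update μ jF (μ jF + 1) x =
            (μ jF + 1) + ∑ x ∈ (Finset.univ \ {iF}) \ {jF}, μ x :=
          Finset.sum_update_of_mem hjmem _ _
        have s3 : ∑ x, μ x = μ iF + ∑ x ∈ Finset.univ \ {iF}, μ x :=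
          Finset.sum_eq_add_sum_sdiff_singleton_of_mem (Finset.mem_univ iF) μ
        have s4 : ∑ x ∈ Finset.univ \ {iF}, μ x =
            μ jF + ∑ x ∈ (Finset.univ \ {iF}) \ {jF}, μ x :=
          Finset.sum_eq_add_sum_sdiff_singleton_of_mem hjmem μ
        omega
      -- tail sums of ν
      have hTν1 : ∀ k, i < k → k ≤ j → T n ν k = T n μ k + 1 := by
        intro k h1 h2
        have hiFnot : iF ∉ Finset.univ.filter (fun x : Fin n => k ≤ (x : ℕ)) := by
          simp only [Finset.mem_filter, Finset.mem_univ, true_and, hiF, not_le]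
          omega
        have hjFmem : jF ∈ Finset.univ.filter (fun x : Fin n => k ≤ (x : ℕ)) := by
          simp only [Finset.mem_filter, Finset.mem_univ, true_and, hjF]
          omega
        have s1 : T n ν k =
            ∑ x ∈ Finset.univ.filter (fun x : Fin n => k ≤ (x : ℕ)),
              Function.update μ jF (μ jF + 1) x := by
          rw [T, hν]
          exact Finset.sum_update_of_notMem hiFnot _ _
        have s2 : ∑ x ∈ Finset.univ.filter (fun x : Fin n => k ≤ (x : ℕ)),
            Function.update μ jF (μ jF + 1) x =
            (μ jF + 1) + ∑ x ∈ Finset.univ.filter (fun x : Fin n => k ≤ (x : ℕ)) \ {jF}, μ x :=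
          Finset.sum_update_of_mem hjFmem _ _
        have s3 : T n μ k =
            μ jF + ∑ x ∈ Finset.univ.filter (fun x : Fin n => k ≤ (x : ℕ)) \ {jF}, μ x := by
          rw [T]
          exact Finset.sum_eq_add_sum_sdiff_singleton_of_mem hjFmem μ
        omega
      have hTν2 : ∀ k, k ≤ i ∨ j < k → T n ν k = T n μ k := by
        intro k hk
        rcases hk with hk | hk
        · have hiFmem : iF ∈ Finset.univ.filter (fun x : Fin n => k ≤ (x : ℕ)) := by
            simp only [Finset.mem_filter, Finset.mem_univ, true_and, hiF]
            omega
          have hjFmem : jF ∈ Finset.univ.filter (fun x : Fin n => k ≤ (x : ℕ)) \ {iF} := by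
            simp only [Finset.mem_sdiff, Finset.mem_filter, Finset.mem_univ, true_and,
              Finset.mem_singleton, hjF]
            constructor
            · omega
            · simp only [hiF, Fin.ext_iff]
              omega
          have s1 : T n ν k =
              (μ iF - 1) + ∑ x ∈ Finset.univ.filter (fun x : Fin n => k ≤ (x : ℕ)) \ {iF},
                Function.update μ jF (μ jF + 1) x := by
            rw [T, hν]
            exact Finset.sum_update_of_mem hiFmem _ _
          have s2 : ∑ x ∈ Finset.univ.filter (fun x : Fin n => k ≤ (x : ℕ)) \ {iF},
              Function.update μ jF (μ jF + 1) x =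
              (μ jF + 1) + ∑ x ∈ (Finset.univ.filter (fun x : Fin n => k ≤ (x : ℕ)) \ {iF}) \ {jF}, μ x :=
            Finset.sum_update_of_mem hjFmem _ _
          have s3 : T n μ k =
              μ iF + ∑ x ∈ Finset.univ.filter (fun x : Fin n => k ≤ (x : ℕ)) \ {iF}, μ x := by
            rw [T]
            exact Finset.sum_eq_add_sum_sdiff_singleton_of_mem hiFmem μ
          have s4 : ∑ x ∈ Finset.univ.filter (fun x : Fin n => k ≤ (x : ℕ)) \ {iF}, μ x =
              μ jF + ∑ x ∈ (Finset.univ.filter (fun x : Fin n => k ≤ (x : ℕ)) \ {iF}) \ {jF}, μ x :=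
            Finset.sum_eq_add_sum_sdiff_singleton_of_mem hjFmem μ
          omega
        · rw [T, T]
          apply Finset.sum_congr rfl
          intro x hx
          simp only [Finset.mem_filter, Finset.mem_univ, true_and] at hx
          apply hνo
          · intro h
            rw [h] at hx
            simp only [hiF] at hx
            omega
          · intro h
            rw [h] at hx
            simp only [hjF] at hx
            omega
      have hTνge : ∀ k, T n μ k ≤ T n ν k := by
        intro k
        rcases le_or_gt k i with h | h
        · rw [hTν2 k (Or.inl h)]
        · rcases le_or_gt k j with h2 | h2
          · rw [hTν1 k h h2]; omega
          · rw [hTν2 k (Or.inr h2)]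
      have hνdom : ∀ k, T n ν k ≤ T n lam k := by
        intro k
        rcases le_or_gt k i with h | h
        · rw [hTν2 k (Or.inl h)]; exact hdom k
        · rcases le_or_gt k j with h2 | h2
          · rw [hTν1 k h h2]
            exact hstrict k h h2
          · rw [hTν2 k (Or.inr h2)]; exact hdom k
      -- the measure strictly decreases
      have hlt : (∑ k ∈ Finset.range n, (T n lam k - T n ν k)) < d := by
        rw [← hd]
        apply Finset.sum_lt_sum
        · intro k _
          have := hTνge k
          omega
        · refine ⟨k0, Finset.mem_range.2 hk0n, ?_⟩
          have h1 := hTν1 k0 (by omega) (by omega)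
          omega
      -- inductive hypothesis for ν
      have hihν := ih _ hlt ν hνmono hνsum hνdom rfl
      have hihτ := hull_perm_inv lam (Equiv.swap iF jF) hihν
      -- convex combination
      have hABle : (μ iF : ℝ) ≤ (μ jF : ℝ) := by
        exact_mod_cast hμ (le_of_lt hiFltjF)
      have hD : (0 : ℝ) < (μ jF : ℝ) - (μ iF : ℝ) + 2 := by linarith
      set A : ℝ := (μ iF : ℝ) with hA
      set B : ℝ := (μ jF : ℝ) with hB
      have ht0 : (0 : ℝ) ≤ (B - A + 1) / (B - A + 2) := by
        apply div_nonneg <;> linarith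
      have hs0 : (0 : ℝ) ≤ 1 / (B - A + 2) := by
        apply div_nonneg <;> linarith
      have hts : (B - A + 1) / (B - A + 2) + 1 / (B - A + 2) = 1 := by
        field_simp
        ring
      have hcomb : (fun k => (μ k : ℝ)) =
          ((B - A + 1) / (B - A + 2)) • (fun k => (ν k : ℝ)) +
            (1 / (B - A + 2)) • ((fun k => (ν k : ℝ)) ∘ (Equiv.swap iF jF)) := by
        funext x
        simp only [Pi.add_apply, Pi.smul_apply, smul_eq_mul, Function.comp_apply]
        by_cases hx1 : x = iF
        · subst hx1
          rw [Equiv.swap_apply_left, hνi, hνj]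
          rw [Nat.cast_sub hμi1]
          push_cast
          rw [← hA, ← hB]
          field_simp
          ring
        · by_cases hx2 : x = jF
          · subst hx2
            rw [Equiv.swap_apply_right, hνj, hνi]
            rw [Nat.cast_sub hμi1]
            push_cast
            rw [← hA, ← hB]
            field_simp
            ring
          · rw [Equiv.swap_apply_of_ne_of_ne hx1 hx2, hνo x hx1 hx2]
            have h := hts
            nlinarith [hts, sq_nonneg ((μ x : ℝ))]
      rw [hcomb]
      exact (convex_convexHull ℝ _) hihν hihτ ht0 hs0 hts

end NPerm


/-- The Newton polytope of the principal Borel symmetric strongly shifted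
ideal `Sss({λ})` — the convex hull of the exponent vectors of its minimal
monomial generators, which are exactly the monomials `σ(x^μ)` with `μ ∈ P_n`,
`|μ| = |λ|` and `μ ⊴ λ` — equals the permutohedron
`P(λ) = conv{(λ_{σ(1)},…,λ_{σ(n)}) : σ ∈ 𝔖_n}`. -/
theorem newtonPolytope_principalBorel_eq_permutohedron (n : ℕ)
    (lam : Fin n → ℕ) (hlam : Monotone lam) :
    convexHull ℝ {v : Fin n → ℝ |
        ∃ (μ : Fin n → ℕ) (σ : Equiv.Perm (Fin n)), Monotone μ ∧
          ∑ i, μ i = ∑ i, lam i ∧ dominates n μ lam ∧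
          v = fun k => (μ (σ k) : ℝ)} =
      convexHull ℝ {v : Fin n → ℝ |
        ∃ σ : Equiv.Perm (Fin n), v = fun k => (lam (σ k) : ℝ)} := by
  apply Set.Subset.antisymm
  · apply convexHull_min _ (convex_convexHull ℝ _)
    rintro v ⟨μ, σ, hmono, hsum, hdom, rfl⟩
    have hdom' : ∀ k : ℕ, NPerm.T n μ k ≤ NPerm.T n lam k := by
      intro k
      rcases lt_or_ge k n with h | h
      · rw [NPerm.T_eq_Ici μ h, NPerm.T_eq_Ici lam h]
        exact hdom ⟨k, h⟩
      · rw [NPerm.T_of_le μ h, NPerm.T_of_le lam h]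
    have h1 := NPerm.key lam hlam _ μ hmono hsum hdom' rfl
    exact NPerm.hull_perm_inv lam σ h1
  · apply convexHull_mono
    rintro v ⟨σ, rfl⟩
    exact ⟨lam, σ, hlam, rfl, fun k => le_refl _, rfl⟩
end
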